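/- Let A be a finite-dimensional commutative ℚ-algebra with basis b : Basis ι ℚ A (ι finite), and let φ : A →ₗ[ℚ] ℚ be a linear functional whose Gram matrix G, defined by G i j = φ (b i * b j), is invertible. Let w = Σ_{i,j} (G⁻¹ i j) • (b i ⊗ₜ b j) ∈ A ⊗[ℚ] A. Then for all a, c ∈ A: (a ⊗ₜ 1) * w * (1 ⊗ₜ c) = w * (1 ⊗ₜ (a * c)). -/

import Mathlib

open scoped TensorProduct
open Matrix

section Aux

variable {ι : Type*} [Fintype ι] [DecidableEq ι]
    {A : Type*} [CommRing A] [Algebra ℚ A]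

lemma aux_phi_expand (b : Module.Basis ι ℚ A) (φ : A →ₗ[ℚ] ℚ) (x y : A) :
    φ (x * y) = ∑ k, b.repr y k * φ (x * b k) := by
  conv_lhs => rw [← b.sum_repr y]
  rw [Finset.mul_sum, map_sum]
  simp [mul_smul_comm]

lemma aux_sum_comm3 {β : Type*} [AddCommMonoid β] (f : ι → ι → ι → β) :
    ∑ i, ∑ j, ∑ k, f i j k = ∑ k, ∑ j, ∑ i, f i j k := by
  calc ∑ i, ∑ j, ∑ k, f i j k
      = ∑ i, ∑ k, ∑ j, f i j k := Finset.sum_congr rfl fun i _ => Finset.sum_comm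
    _ = ∑ k, ∑ i, ∑ j, f i j k := Finset.sum_comm
    _ = ∑ k, ∑ j, ∑ i, f i j k := Finset.sum_congr rfl fun k _ => Finset.sum_comm

lemma aux_key (b : Module.Basis ι ℚ A) (φ : A →ₗ[ℚ] ℚ) (G : Matrix ι ι ℚ)
    (hG : ∀ i j, G i j = φ (b i * b j)) (hinv : IsUnit G.det) (a : A) :
    (a ⊗ₜ[ℚ] (1 : A)) * (∑ i, ∑ j, (G⁻¹ i j) • (b i ⊗ₜ[ℚ] b j)) =
      (∑ i, ∑ j, (G⁻¹ i j) • (b i ⊗ₜ[ℚ] b j)) * ((1 : A) ⊗ₜ[ℚ] a) := by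
  set M : Matrix ι ι ℚ := fun k i => b.repr (a * b i) k with hM
  have hGM : G * M = Mᵀ * G := by
    ext i j
    have h1 : φ (b i * (a * b j)) = ∑ k, b.repr (a * b j) k * φ (b i * b k) :=
      aux_phi_expand b φ _ _
    have h2 : φ (b j * (a * b i)) = ∑ k, b.repr (a * b i) k * φ (b j * b k) :=
      aux_phi_expand b φ _ _
    have h3 : φ (b i * (a * b j)) = φ (b j * (a * b i)) := by ring_nf
    simp only [Matrix.mul_apply, Matrix.transpose_apply]
    simp only [hM, hG]
    calc ∑ k, φ (b i * b k) * b.repr (a * b j) k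
        = φ (b i * (a * b j)) := by rw [h1]; exact Finset.sum_congr rfl fun k _ => mul_comm _ _
      _ = φ (b j * (a * b i)) := h3
      _ = ∑ k, b.repr (a * b i) k * φ (b k * b j) := by
          rw [h2]; exact Finset.sum_congr rfl fun k _ => by rw [mul_comm (b j) (b k)]
  have hMG : M * G⁻¹ = G⁻¹ * Mᵀ := by
    calc M * G⁻¹ = G⁻¹ * (G * M) * G⁻¹ := by
          rw [← Matrix.mul_assoc G⁻¹ G M, Matrix.nonsing_inv_mul G hinv, Matrix.one_mul]
      _ = G⁻¹ * (Mᵀ * G) * G⁻¹ := by rw [hGM]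
      _ = G⁻¹ * Mᵀ := by
          rw [Matrix.mul_assoc, Matrix.mul_assoc, Matrix.mul_nonsing_inv G hinv,
            Matrix.mul_one]
  have lhs_eq :
      (a ⊗ₜ[ℚ] (1 : A)) * (∑ i, ∑ j, (G⁻¹ i j) • (b i ⊗ₜ[ℚ] b j)) =
        ∑ k, ∑ j, ((M * G⁻¹) k j) • (b k ⊗ₜ[ℚ] b j) := by
    simp only [Finset.mul_sum, mul_smul_comm, Algebra.TensorProduct.tmul_mul_tmul, one_mul]
    have step : ∀ i j : ι, (G⁻¹ i j) • ((a * b i) ⊗ₜ[ℚ] (b j)) =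
        ∑ k, (M k i * G⁻¹ i j) • (b k ⊗ₜ[ℚ] b j) := by
      intro i j
      conv_lhs => rw [← b.sum_repr (a * b i)]
      rw [TensorProduct.sum_tmul, Finset.smul_sum]
      refine Finset.sum_congr rfl fun k _ => ?_
      rw [TensorProduct.smul_tmul', smul_smul, mul_comm]
      rfl
    calc (∑ i, ∑ j, (G⁻¹ i j) • ((a * b i) ⊗ₜ[ℚ] (b j)))
        = ∑ i, ∑ j, ∑ k, (M k i * G⁻¹ i j) • (b k ⊗ₜ[ℚ] b j) := by
          exact Finset.sum_congr rfl fun i _ => Finset.sum_congr rfl fun j _ => step i j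
      _ = ∑ k, ∑ j, ∑ i, (M k i * G⁻¹ i j) • (b k ⊗ₜ[ℚ] b j) := aux_sum_comm3 _
      _ = ∑ k, ∑ j, ((M * G⁻¹) k j) • (b k ⊗ₜ[ℚ] b j) := by
          simp only [Matrix.mul_apply, Finset.sum_smul]
  have rhs_eq :
      (∑ i, ∑ j, (G⁻¹ i j) • (b i ⊗ₜ[ℚ] b j)) * ((1 : A) ⊗ₜ[ℚ] a) =
        ∑ i, ∑ k, ((G⁻¹ * Mᵀ) i k) • (b i ⊗ₜ[ℚ] b k) := by
    simp only [Finset.sum_mul, smul_mul_assoc, Algebra.TensorProduct.tmul_mul_tmul, mul_one]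
    refine Finset.sum_congr rfl fun i _ => ?_
    have step : ∀ j : ι, (G⁻¹ i j) • ((b i) ⊗ₜ[ℚ] (b j * a)) =
        ∑ k, (G⁻¹ i j * M k j) • (b i ⊗ₜ[ℚ] b k) := by
      intro j
      have : b j * a = a * b j := mul_comm _ _
      rw [this]
      conv_lhs => rw [← b.sum_repr (a * b j)]
      rw [TensorProduct.tmul_sum, Finset.smul_sum]
      refine Finset.sum_congr rfl fun k _ => ?_
      rw [TensorProduct.tmul_smul, smul_smul]
    calc (∑ j, (G⁻¹ i j) • ((b i) ⊗ₜ[ℚ] (b j * a)))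
        = ∑ j, ∑ k, (G⁻¹ i j * M k j) • (b i ⊗ₜ[ℚ] b k) :=
          Finset.sum_congr rfl fun j _ => step j
      _ = ∑ k, ((G⁻¹ * Mᵀ) i k) • (b i ⊗ₜ[ℚ] b k) := by
          rw [Finset.sum_comm]
          simp only [Matrix.mul_apply, Matrix.transpose_apply, Finset.sum_smul]
  rw [lhs_eq, rhs_eq, hMG]

end Aux

/-- relation (31) of the paper: For a finite-dimensional commutative
ℚ-algebra `A` with basis `b` and a linear functional `φ` whose Gram matrix
`G i j = φ (b i * b j)` is invertible, the element `w = Σ_{i,j} (G⁻¹ i j) • (b i ⊗ b j)`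
of `A ⊗[ℚ] A` satisfies `(a ⊗ 1) * w * (1 ⊗ c) = w * (1 ⊗ (a * c))` for all `a c ∈ A`. -/
theorem inverse_gram_tensor_two_sided_symmetry
    {ι : Type*} [Fintype ι] [DecidableEq ι]
    {A : Type*} [CommRing A] [Algebra ℚ A]
    (b : Module.Basis ι ℚ A)
    (φ : A →ₗ[ℚ] ℚ)
    (G : Matrix ι ι ℚ)
    (hG : ∀ i j, G i j = φ (b i * b j))
    (hinv : IsUnit G.det)
    (w : A ⊗[ℚ] A)
    (hw : w = ∑ i, ∑ j, (G⁻¹ i j) • (b i ⊗ₜ[ℚ] b j)) :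
    ∀ a c : A, (a ⊗ₜ[ℚ] (1 : A)) * w * ((1 : A) ⊗ₜ[ℚ] c) = w * ((1 : A) ⊗ₜ[ℚ] (a * c)) := by
  intro a c
  subst hw
  rw [aux_key b φ G hG hinv a, mul_assoc, Algebra.TensorProduct.tmul_mul_tmul, one_mul]
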